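/- Let v_A be Alice's density with δ ≤ v_A ≤ Δ and ∫_0^1 v_A = 1. There exists a pure Alice strategy S_A, depending only on v_A (defined for every round, independent of any horizon), such that for every infinite sequence of Bob choices b : {1,2,…} → {L,R} (with Alice's cuts a_t generated by S_A from the history) and for every t ≥ 3: (i) for every Bob density v_B with 0 ≤ v_B(x) ≤ Δ for all x and ∫_0^1 v_B = 1, the cumulative payoff of a Bob with density v_B satisfies Σ_{i=1}^t u_B^i ≤ t·(1/2 + (5Δ+11)/ln(2t/5)); and (ii) Alice's cumulative payoff satisfies Σ_{i=1}^t u_A^i ≥ t·(1/2 − 4/√(t−1)). -/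

import Mathlib

open MeasureTheory

/-- Bob's choice of the left or right piece. -/
inductive Choice
  | L
  | R
deriving DecidableEq

instance : Fintype Choice :=
  ⟨{Choice.L, Choice.R}, fun x => by cases x <;> simp⟩

/-- The cumulative valuation `V(x) = ∫_0^x v`. -/
noncomputable def cumul (v : ℝ → ℝ) (x : ℝ) : ℝ := ∫ y in (0:ℝ)..x, v y

/-- `v` is an integrable value density on `[0,1]`, bounded between `lo` and `hi`,
integrating to `1`. -/
def IsDensity (lo hi : ℝ) (v : ℝ → ℝ) : Prop :=
  IntervalIntegrable v volume 0 1 ∧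
  (∀ x ∈ Set.Icc (0:ℝ) 1, lo ≤ v x ∧ v x ≤ hi) ∧
  (∫ y in (0:ℝ)..1, v y) = 1

/-- Alice's round-`t` utility: if Bob picks `L` she gets `[a_t,1]`, else `[0,a_t]`. -/
noncomputable def uA (vA : ℝ → ℝ) (a : ℕ → ℝ) (b : ℕ → Choice) (t : ℕ) : ℝ :=
  if b t = Choice.L then 1 - cumul vA (a t) else cumul vA (a t)

/-- Bob's round-`t` utility: if he picks `L` he gets `[0,a_t]`, else `[a_t,1]`. -/
noncomputable def uB (vB : ℝ → ℝ) (a : ℕ → ℝ) (b : ℕ → Choice) (t : ℕ) : ℝ :=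
  if b t = Choice.L then cumul vB (a t) else 1 - cumul vB (a t)

/-- A pure Alice strategy: given the history `(a_1,…,a_t; b_1,…,b_t)`, produce the
next cut `a_{t+1}`. -/
def AliceStrategy : Type := ∀ t : ℕ, (Fin t → ℝ) → (Fin t → Choice) → ℝ

/-- A pure (sequential) Bob strategy: given `(a_1,…,a_{t+1}; b_1,…,b_t)`, produce the
next choice `b_{t+1}`. -/
def BobStrategy : Type := ∀ t : ℕ, (Fin (t+1) → ℝ) → (Fin t → Choice) → Choice

/-- The trajectory `(a,b)` is consistent with Alice's strategy `S` over horizon `T`. -/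
def AliceConsistent (S : AliceStrategy) (a : ℕ → ℝ) (b : ℕ → Choice) (T : ℕ) : Prop :=
  ∀ t : ℕ, t < T → a (t+1) = S t (fun i => a (i.1+1)) (fun i => b (i.1+1))

/-- The trajectory `(a,b)` is consistent with Bob's strategy `S` over horizon `T`. -/
def BobConsistent (S : BobStrategy) (a : ℕ → ℝ) (b : ℕ → Choice) (T : ℕ) : Prop :=
  ∀ t : ℕ, t < T → b (t+1) = S t (fun i => a (i.1+1)) (fun i => b (i.1+1))

/-- Alice's Stackelberg value `u_A^* = max(V_A(m_B), 1 - V_A(m_B))`. -/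
noncomputable def stackValue (vA : ℝ → ℝ) (mB : ℝ) : ℝ :=
  max (cumul vA mB) (1 - cumul vA mB)

noncomputable def clip01 (x : ℝ) : ℝ := max 0 (min 1 x)

noncomputable def sgnC : Choice → ℝ
  | Choice.L => 1
  | Choice.R => -1

noncomputable def eta (Δ : ℝ) (k : ℕ) : ℝ := 1 / (2 * Δ * 2 ^ ((k + 1) / 2))

noncomputable def cuts (Δ m : ℝ) (b : ℕ → Choice) : ℕ → ℝ
  | 0 => m
  | i + 1 => if i + 1 = 2 ^ Nat.log 2 (i + 1) then m
      else clip01 (cuts Δ m b i - sgnC (b i) * eta Δ (Nat.log 2 i))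

noncomputable def Kf (v : ℝ → ℝ) (x : ℝ) : ℝ := ∫ y in (0:ℝ)..x, (cumul v y - 1/2)

/-- hypotheses on a density -/
lemma clip01_mem (x : ℝ) : clip01 x ∈ Set.Icc (0:ℝ) 1 := by
  constructor
  · exact le_max_left _ _
  · simp only [clip01]
    exact max_le (by norm_num) (min_le_left _ _)

structure GoodV (Δ : ℝ) (v : ℝ → ℝ) : Prop where
  integ : IntervalIntegrable v volume 0 1
  nonneg : ∀ x ∈ Set.Icc (0:ℝ) 1, 0 ≤ v x
  hle : ∀ x ∈ Set.Icc (0:ℝ) 1, v x ≤ Δ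
  total : (∫ y in (0:ℝ)..1, v y) = 1

namespace GoodV

variable {Δ : ℝ} {v : ℝ → ℝ} (hg : GoodV Δ v)
include hg

lemma integ_sub {x y : ℝ} (hx : x ∈ Set.Icc (0:ℝ) 1) (hy : y ∈ Set.Icc (0:ℝ) 1) :
    IntervalIntegrable v volume x y := by
  refine hg.integ.mono_set ?_
  rw [Set.uIcc_of_le (by norm_num : (0:ℝ) ≤ 1)]
  exact Set.uIcc_subset_Icc hx hy

omit hg in
lemma cumul_zero : cumul v 0 = 0 := intervalIntegral.integral_same

lemma cumul_one : cumul v 1 = 1 := hg.total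

lemma cumul_diff {x y : ℝ} (hx : x ∈ Set.Icc (0:ℝ) 1) (hy : y ∈ Set.Icc (0:ℝ) 1) :
    cumul v y - cumul v x = ∫ z in x..y, v z := by
  have h := intervalIntegral.integral_add_adjacent_intervals
    (hg.integ_sub (Set.left_mem_Icc.2 (by norm_num)) hx)
    (hg.integ_sub hx hy)
  simp only [cumul]
  linarith [h]

lemma cumul_mono {x y : ℝ} (hx : x ∈ Set.Icc (0:ℝ) 1) (hy : y ∈ Set.Icc (0:ℝ) 1)
    (hxy : x ≤ y) : cumul v x ≤ cumul v y := by
  have h := hg.cumul_diff hx hy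
  have : (0:ℝ) ≤ ∫ z in x..y, v z := by
    apply intervalIntegral.integral_nonneg hxy
    intro u hu
    exact hg.nonneg u ⟨le_trans hx.1 hu.1, le_trans hu.2 hy.2⟩
  linarith

lemma cumul_lip {x y : ℝ} (hx : x ∈ Set.Icc (0:ℝ) 1) (hy : y ∈ Set.Icc (0:ℝ) 1)
    (hxy : x ≤ y) : cumul v y - cumul v x ≤ Δ * (y - x) := by
  rw [hg.cumul_diff hx hy]
  have h := intervalIntegral.integral_mono_on (μ := volume) hxy (hg.integ_sub hx hy)
    (intervalIntegrable_const (c := Δ)) (fun u hu => hg.hle u ⟨le_trans hx.1 hu.1, le_trans hu.2 hy.2⟩)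
  rw [intervalIntegral.integral_const] at h
  simpa [smul_eq_mul, mul_comm] using h

lemma cumul_nonneg {x : ℝ} (hx : x ∈ Set.Icc (0:ℝ) 1) : 0 ≤ cumul v x := by
  have := hg.cumul_mono (Set.left_mem_Icc.2 (by norm_num)) hx hx.1
  rw [GoodV.cumul_zero (v := v)] at this; exact this

lemma cumul_le_one {x : ℝ} (hx : x ∈ Set.Icc (0:ℝ) 1) : cumul v x ≤ 1 := by
  have := hg.cumul_mono hx (Set.right_mem_Icc.2 (by norm_num)) hx.2
  rw [hg.cumul_one] at this; exact this

lemma cumul_cont : ContinuousOn (cumul v) (Set.Icc (0:ℝ) 1) := by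
  have h := intervalIntegral.continuousOn_primitive_interval
    (f := v) (μ := volume) (a := 0) (b := 1) ?_
  · rw [Set.uIcc_of_le (by norm_num : (0:ℝ) ≤ 1)] at h
    exact h
  · rw [Set.uIcc_of_le (by norm_num : (0:ℝ) ≤ 1)]
    rw [integrableOn_Icc_iff_integrableOn_Ioc]
    have := hg.integ.def'
    rwa [Set.uIoc_of_le (by norm_num : (0:ℝ) ≤ 1)] at this

lemma g_cont : ContinuousOn (fun y => cumul v y - 1/2) (Set.Icc (0:ℝ) 1) :=
  hg.cumul_cont.sub continuousOn_const

lemma g_integ {x y : ℝ} (hx : x ∈ Set.Icc (0:ℝ) 1) (hy : y ∈ Set.Icc (0:ℝ) 1) :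
    IntervalIntegrable (fun y => cumul v y - 1/2) volume x y := by
  apply ContinuousOn.intervalIntegrable
  apply hg.g_cont.mono
  exact Set.uIcc_subset_Icc hx hy

lemma K_diff {x y : ℝ} (hx : x ∈ Set.Icc (0:ℝ) 1) (hy : y ∈ Set.Icc (0:ℝ) 1) :
    Kf v y - Kf v x = ∫ z in x..y, (cumul v z - 1/2) := by
  have h := intervalIntegral.integral_add_adjacent_intervals
    (hg.g_integ (Set.left_mem_Icc.2 (by norm_num)) hx)
    (hg.g_integ hx hy)
  simp only [Kf]
  linarith [h]

/-- |K y - K x| ≤ |y-x|/2, stated for x ≤ y as two bounds -/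
lemma K_diff_le {x y : ℝ} (hx : x ∈ Set.Icc (0:ℝ) 1) (hy : y ∈ Set.Icc (0:ℝ) 1)
    (hxy : x ≤ y) : Kf v y - Kf v x ≤ (y - x) * (1/2) := by
  rw [hg.K_diff hx hy]
  have h := intervalIntegral.integral_mono_on (μ := volume) hxy (hg.g_integ hx hy)
    (intervalIntegrable_const (c := (1:ℝ)/2)) ?_
  · rw [intervalIntegral.integral_const] at h
    simpa [smul_eq_mul, mul_comm] using h
  · intro u hu
    have := hg.cumul_le_one ⟨le_trans hx.1 hu.1, le_trans hu.2 hy.2⟩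
    linarith

lemma K_diff_ge {x y : ℝ} (hx : x ∈ Set.Icc (0:ℝ) 1) (hy : y ∈ Set.Icc (0:ℝ) 1)
    (hxy : x ≤ y) : -(y - x) * (1/2) ≤ Kf v y - Kf v x := by
  rw [hg.K_diff hx hy]
  have h := intervalIntegral.integral_mono_on (μ := volume) hxy
    (intervalIntegrable_const (c := -(1:ℝ)/2)) (hg.g_integ hx hy) ?_
  · rw [intervalIntegral.integral_const] at h
    have e : (y - x) • (-(1:ℝ)/2) = -(y-x) * (1/2) := by
      rw [smul_eq_mul]; ring
    rw [e] at h
    exact h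
  · intro u hu
    have := hg.cumul_nonneg ⟨le_trans hx.1 hu.1, le_trans hu.2 hy.2⟩
    linarith

end GoodV

section Step

variable {Δ : ℝ} {v : ℝ → ℝ}

lemma step_bound (hg : GoodV Δ v) (hΔ : 1 ≤ Δ) {η c s : ℝ}
    (hη0 : 0 < η) (hη : η ≤ 1 / (2 * Δ)) (hc : c ∈ Set.Icc (0:ℝ) 1)
    (hs : s = 1 ∨ s = -1) :
    s * (cumul v c - 1/2) ≤ (Kf v c - Kf v (clip01 (c - s * η))) / η + Δ * η := by
  have hΔ0 : (0:ℝ) < Δ := lt_of_lt_of_le one_pos hΔ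
  have hDη : Δ * η ≤ 1/2 := by
    rw [le_div_iff₀ (by positivity)] at hη
    linarith [hη]
  have h0 : (0:ℝ) ∈ Set.Icc (0:ℝ) 1 := by norm_num
  have h1 : (1:ℝ) ∈ Set.Icc (0:ℝ) 1 := by norm_num
  rcases hs with hs | hs
  · subst hs
    rw [one_mul]
    have hcη1 : c - η ≤ 1 := by linarith [hc.2]
    have hclip : clip01 (c - 1 * η) = max 0 (c - η) := by
      simp only [clip01, one_mul, min_eq_right hcη1]
    rw [hclip]
    by_cases hcase : 0 ≤ c - η
    · -- no clipping
      rw [max_eq_right hcase]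
      have hmem : c - η ∈ Set.Icc (0:ℝ) 1 := ⟨hcase, hcη1⟩
      have hKd := hg.K_diff hmem hc
      -- lower bound the integral ∫_{c-η}^c (f - 1/2) ≥ η (f c - 1/2 - Δη)
      have hlow : (c - (c - η)) • (cumul v c - 1/2 - Δ * η) ≤ ∫ z in (c-η)..c, (cumul v z - 1/2) := by
        rw [← intervalIntegral.integral_const]
        apply intervalIntegral.integral_mono_on (by linarith) intervalIntegrable_const
          (hg.g_integ hmem hc)
        intro u hu
        have hum : u ∈ Set.Icc (0:ℝ) 1 := ⟨le_trans hmem.1 hu.1, le_trans hu.2 hc.2⟩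
        have := hg.cumul_lip hum hc hu.2
        have hcu : c - u ≤ η := by linarith [hu.1]
        nlinarith [hΔ0]
      rw [smul_eq_mul] at hlow
      have : η * (cumul v c - 1/2 - Δ * η) ≤ Kf v c - Kf v (c - η) := by
        rw [hKd]; convert hlow using 2; ring
      have hd : cumul v c - 1/2 - Δ * η ≤ (Kf v c - Kf v (c - η)) / η := by
        rw [le_div_iff₀ hη0]
        nlinarith
      linarith [hd]
    · -- clipped at 0
      push_neg at hcase
      rw [max_eq_left (le_of_lt hcase)]
      have hcsmall : c < η := by linarith
      have hfc : cumul v c ≤ Δ * c := by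
        have := hg.cumul_lip h0 hc hc.1
        rw [GoodV.cumul_zero (v := v)] at this
        linarith
      have hK : -(c - 0) * (1/2) ≤ Kf v c - Kf v 0 := hg.K_diff_ge h0 hc hc.1
      have hKdiv : (Kf v c - Kf v 0) / η ≥ -(1/2) := by
        rw [ge_iff_le, le_div_iff₀ hη0]
        nlinarith [hc.1]
      have : cumul v c - 1/2 ≤ Δ * η - 1/2 := by nlinarith [hc.1]
      linarith [hKdiv]
  · subst hs
    rw [neg_one_mul, neg_sub']
    have hc0 : 0 ≤ c + η := by linarith [hc.1]
    have hclip : clip01 (c - (-1) * η) = min 1 (c + η) := by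
      have : c - (-1) * η = c + η := by ring
      rw [this]
      simp only [clip01]
      rcases le_or_gt 1 (c + η) with h | h
      · rw [min_eq_left h]; simp
      · rw [min_eq_right (le_of_lt h), max_eq_right hc0]
    rw [hclip]
    by_cases hcase : c + η ≤ 1
    · rw [min_eq_right hcase]
      have hmem : c + η ∈ Set.Icc (0:ℝ) 1 := ⟨hc0, hcase⟩
      have hKd := hg.K_diff hc hmem
      have hup : (∫ z in c..(c+η), (cumul v z - 1/2)) ≤ (c + η - c) • (cumul v c - 1/2 + Δ * η) := by
        rw [← intervalIntegral.integral_const]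
        apply intervalIntegral.integral_mono_on (by linarith) (hg.g_integ hc hmem)
          intervalIntegrable_const
        intro u hu
        have hum : u ∈ Set.Icc (0:ℝ) 1 := ⟨le_trans hc.1 hu.1, le_trans hu.2 hmem.2⟩
        have := hg.cumul_lip hc hum hu.1
        have huc : u - c ≤ η := by linarith [hu.2]
        nlinarith [hΔ0]
      rw [smul_eq_mul] at hup
      have hKge : Kf v c - Kf v (c + η) ≥ -(η * (cumul v c - 1/2 + Δ * η)) := by
        have : Kf v (c+η) - Kf v c = ∫ z in c..(c+η), (cumul v z - 1/2) := hKd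
        nlinarith [hup]
      have hd : (Kf v c - Kf v (c + η)) / η ≥ -(cumul v c - 1/2 + Δ * η) := by
        rw [ge_iff_le, le_div_iff₀ hη0]
        nlinarith [hKge]
      have : (1:ℝ)/2 - cumul v c = -(cumul v c - 1/2 + Δ * η) + Δ * η := by ring
      linarith [hd]
    · push_neg at hcase
      rw [min_eq_left (le_of_lt hcase)]
      have hfc : 1 - cumul v c ≤ Δ * (1 - c) := by
        have := hg.cumul_lip hc h1 hc.2
        rw [hg.cumul_one] at this
        linarith
      have h1c : 1 - c < η := by linarith
      have hK : Kf v 1 - Kf v c ≤ (1 - c) * (1/2) := hg.K_diff_le hc h1 hc.2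
      have hKdiv : (Kf v c - Kf v 1) / η ≥ -(1/2) := by
        rw [ge_iff_le, le_div_iff₀ hη0]
        nlinarith [hc.2]
      have : 1/2 - cumul v c ≤ Δ * η - 1/2 := by nlinarith [hc.2]
      linarith [hKdiv]

end Step

section Machinery

variable {Δ m : ℝ} {v : ℝ → ℝ} {b : ℕ → Choice}

lemma eta_pos (hΔ0 : 0 < Δ) (k : ℕ) : 0 < eta Δ k := by
  unfold eta; positivity

lemma eta_le (hΔ : 1 ≤ Δ) (k : ℕ) : eta Δ k ≤ 1 / (2 * Δ) := by
  have hΔ0 : (0:ℝ) < Δ := lt_of_lt_of_le one_pos hΔ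
  unfold eta
  apply div_le_div_of_nonneg_left (by norm_num) (by positivity)
  have : (1:ℝ) ≤ (2:ℝ) ^ ((k+1)/2) := one_le_pow₀ (by norm_num)
  nlinarith

lemma eta_anti (hΔ0 : 0 < Δ) (k : ℕ) : eta Δ (k+1) ≤ eta Δ k := by
  unfold eta
  apply div_le_div_of_nonneg_left (by norm_num) (by positivity)
  have h2 : ((k+1)/2 : ℕ) ≤ ((k+2)/2 : ℕ) := by omega
  have : (2:ℝ) ^ ((k+1)/2) ≤ (2:ℝ) ^ ((k+2)/2) :=
    pow_le_pow_right₀ (by norm_num) h2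
  nlinarith

lemma sgnC_cases (c : Choice) : sgnC c = 1 ∨ sgnC c = -1 := by
  cases c <;> simp [sgnC]

lemma cuts_mem (hm : m ∈ Set.Icc (0:ℝ) 1) : ∀ i, cuts Δ m b i ∈ Set.Icc (0:ℝ) 1 := by
  intro i
  induction i with
  | zero => exact hm
  | succ n _ =>
    show cuts Δ m b (n+1) ∈ _
    rw [cuts]
    split
    · exact hm
    · exact clip01_mem _

lemma cuts_one : cuts Δ m b 1 = m := by
  rw [cuts]
  simp

lemma cuts_succ_succ (t : ℕ) (h : t + 2 ≠ 2 ^ Nat.log 2 (t+2)) :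
    cuts Δ m b (t+2) = clip01 (cuts Δ m b (t+1) - sgnC (b (t+1)) * eta Δ (Nat.log 2 (t+1))) := by
  show cuts Δ m b (t+1+1) = _
  rw [cuts]
  simp only [if_neg h]

lemma cuts_succ_pow (t : ℕ) (h : t + 2 = 2 ^ Nat.log 2 (t+2)) :
    cuts Δ m b (t+2) = m := by
  show cuts Δ m b (t+1+1) = m
  rw [cuts]
  simp only [if_pos h]

lemma log_succ_eq_of_not_pow {t : ℕ} (h : t + 2 ≠ 2 ^ Nat.log 2 (t+2)) :
    Nat.log 2 (t+2) = Nat.log 2 (t+1) := by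
  set k := Nat.log 2 (t+2) with hk
  have h1 : 2 ^ k ≤ t + 2 := Nat.pow_log_le_self 2 (by omega)
  have h2 : t + 2 < 2 ^ (k + 1) := Nat.lt_pow_succ_log_self (by norm_num) _
  have h1' : 2 ^ k ≤ t + 1 := by omega
  have h2' : t + 1 < 2 ^ (k + 1) := by omega
  exact (Nat.log_eq_of_pow_le_of_lt_pow h1' h2').symm

lemma log_succ_eq_of_pow {t : ℕ} (h : t + 2 = 2 ^ Nat.log 2 (t+2)) :
    Nat.log 2 (t+2) = Nat.log 2 (t+1) + 1 := by
  set k := Nat.log 2 (t+2) with hk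
  have hk1 : 1 ≤ k := by
    by_contra hc
    push_neg at hc
    interval_cases k <;> omega
  have hpow : 2 ^ (k-1) * 2 = 2 ^ k := by
    have e : k - 1 + 1 = k := by omega
    conv_rhs => rw [← e]
    rw [pow_succ]
  have h1 : 2 ^ (k-1) ≤ t + 1 := by
    have : 1 ≤ 2 ^ (k-1) := Nat.one_le_two_pow
    omega
  have h2 : t + 1 < 2 ^ (k-1+1) := by
    have : k - 1 + 1 = k := by omega
    rw [this]
    omega
  have := Nat.log_eq_of_pow_le_of_lt_pow h1 h2
  omega

variable (hg : GoodV Δ v)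
include hg

lemma K_abs (hx : x ∈ Set.Icc (0:ℝ) 1) (hy : y ∈ Set.Icc (0:ℝ) 1) :
    Kf v x - Kf v y ≤ 1/2 := by
  rcases le_total x y with h | h
  · have := hg.K_diff_ge hx hy h
    have hd : y - x ≤ 1 := by
      have := hx.1; have := hy.2; linarith
    nlinarith
  · have := hg.K_diff_le hy hx h
    have hd : x - y ≤ 1 := by
      have := hy.1; have := hx.2; linarith
    nlinarith

lemma K_min (hm : m ∈ Set.Icc (0:ℝ) 1) (hfm : cumul v m = 1/2)
    (hx : x ∈ Set.Icc (0:ℝ) 1) : Kf v m ≤ Kf v x := by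
  rcases le_total m x with h | h
  · have hKd := hg.K_diff hm hx
    have : (0:ℝ) ≤ ∫ z in m..x, (cumul v z - 1/2) := by
      apply intervalIntegral.integral_nonneg h
      intro u hu
      have hum : u ∈ Set.Icc (0:ℝ) 1 := ⟨le_trans hm.1 hu.1, le_trans hu.2 hx.2⟩
      have := hg.cumul_mono hm hum hu.1
      linarith [hfm]
    linarith
  · have hKd := hg.K_diff hx hm
    have : (∫ z in x..m, (cumul v z - 1/2)) ≤ 0 := by
      rw [← intervalIntegral.integral_zero (a := x) (b := m) (μ := volume)]
      apply intervalIntegral.integral_mono_on h (hg.g_integ hx hm)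
        intervalIntegrable_const
      intro u hu
      have hum : u ∈ Set.Icc (0:ℝ) 1 := ⟨le_trans hx.1 hu.1, le_trans hu.2 hm.2⟩
      have := hg.cumul_mono hum hm hu.2
      linarith [hfm]
    linarith

end Machinery

section Invariants

variable {Δ m : ℝ} {v : ℝ → ℝ} {b : ℕ → Choice}

lemma inv_bob (hg : GoodV Δ v) (hΔ : 1 ≤ Δ) (hm : m ∈ Set.Icc (0:ℝ) 1) :
    ∀ t : ℕ, ∑ i ∈ Finset.Icc 1 t, sgnC (b i) * (cumul v (cuts Δ m b i) - 1/2)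
      ≤ (∑ i ∈ Finset.Icc 1 t, Δ * eta Δ (Nat.log 2 i))
        + (∑ j ∈ Finset.range (Nat.log 2 (t+1) + 1), 1 / (2 * eta Δ j))
        - (Kf v (cuts Δ m b (t+1)) - Kf v m) / eta Δ (Nat.log 2 (t+1)) := by
  have hΔ0 : (0:ℝ) < Δ := lt_of_lt_of_le one_pos hΔ
  intro t
  induction t with
  | zero =>
    simp only [Finset.Icc_self, Finset.Icc_eq_empty_of_lt (by norm_num : (1:ℕ) > 0)]
    rw [cuts_one]
    simp only [Finset.sum_empty, sub_self, zero_div, sub_zero, zero_add]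
    apply Finset.sum_nonneg
    intro j _
    have := eta_pos (lt_of_lt_of_le one_pos hΔ) j
    positivity
  | succ t IH =>
    have hsum1 : ∑ i ∈ Finset.Icc 1 (t+1), sgnC (b i) * (cumul v (cuts Δ m b i) - 1/2)
        = (∑ i ∈ Finset.Icc 1 t, sgnC (b i) * (cumul v (cuts Δ m b i) - 1/2))
          + sgnC (b (t+1)) * (cumul v (cuts Δ m b (t+1)) - 1/2) :=
      Finset.sum_Icc_succ_top (by omega) _
    have hsum2 : ∑ i ∈ Finset.Icc 1 (t+1), Δ * eta Δ (Nat.log 2 i)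
        = (∑ i ∈ Finset.Icc 1 t, Δ * eta Δ (Nat.log 2 i)) + Δ * eta Δ (Nat.log 2 (t+1)) :=
      Finset.sum_Icc_succ_top (by omega) _
    set k := Nat.log 2 (t+1) with hkdef
    set c := cuts Δ m b (t+1) with hcdef
    set s := sgnC (b (t+1)) with hsdef
    set d := clip01 (c - s * eta Δ k) with hddef
    have hstep : s * (cumul v c - 1/2) ≤ (Kf v c - Kf v d) / eta Δ k + Δ * eta Δ k :=
      step_bound hg hΔ (eta_pos hΔ0 k) (eta_le hΔ k) (cuts_mem hm (t+1)) (sgnC_cases _)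
    have hsplit : (Kf v c - Kf v d) / eta Δ k
        = (Kf v c - Kf v m) / eta Δ k + (Kf v m - Kf v d) / eta Δ k := by
      rw [← add_div]; ring_nf
    by_cases hpow : t + 2 = 2 ^ Nat.log 2 (t+2)
    · -- epoch boundary
      have hlog : Nat.log 2 (t+2) = k + 1 := by
        rw [log_succ_eq_of_pow hpow]
      have hc2 : cuts Δ m b (t+2) = m := cuts_succ_pow t hpow
      have hKmd : Kf v m - Kf v d ≤ 1/2 := K_abs hg hm (clip01_mem _)
      have hbound : (Kf v m - Kf v d) / eta Δ k ≤ 1 / (2 * eta Δ (k+1)) := by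
        have e1 : (Kf v m - Kf v d) / eta Δ k ≤ (1/2) / eta Δ k :=
          (div_le_div_iff_of_pos_right (eta_pos hΔ0 k)).mpr hKmd
        have e2 : (1/2 : ℝ) / eta Δ k = 1 / (2 * eta Δ k) := by
          rw [div_div]
        have e3 : (1:ℝ) / (2 * eta Δ k) ≤ 1 / (2 * eta Δ (k+1)) := by
          apply one_div_le_one_div_of_le
          · have := eta_pos hΔ0 (k+1); linarith
          · have := eta_anti hΔ0 k; linarith
        linarith [e1, e2.le, e3]
      rw [hsum1, hsum2]
      show _ ≤ _ + (∑ j ∈ Finset.range (Nat.log 2 (t+1+1) + 1), 1 / (2 * eta Δ j))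
        - (Kf v (cuts Δ m b (t+1+1)) - Kf v m) / eta Δ (Nat.log 2 (t+1+1))
      have ht2 : t + 1 + 1 = t + 2 := rfl
      rw [ht2, hlog, hc2, sub_self, zero_div, sub_zero, Finset.sum_range_succ]
      linarith [IH, hstep, hbound]
    · -- interior step
      have hlog : Nat.log 2 (t+2) = k := by rw [log_succ_eq_of_not_pow hpow]
      have hc2 : cuts Δ m b (t+2) = d := cuts_succ_succ t hpow
      have hKmd : Kf v m - Kf v d = -(Kf v d - Kf v m) := by ring
      rw [hsum1, hsum2]
      show _ ≤ _ + (∑ j ∈ Finset.range (Nat.log 2 (t+1+1) + 1), 1 / (2 * eta Δ j))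
        - (Kf v (cuts Δ m b (t+1+1)) - Kf v m) / eta Δ (Nat.log 2 (t+1+1))
      have ht2 : t + 1 + 1 = t + 2 := rfl
      rw [ht2, hlog, hc2]
      have hneg : (Kf v m - Kf v d) / eta Δ k = -((Kf v d - Kf v m) / eta Δ k) := by
        rw [← neg_div]; ring_nf
      linarith [IH, hstep]

end Invariants

section InvariantA

variable {Δ m : ℝ} {v : ℝ → ℝ} {b : ℕ → Choice}

lemma inv_alice (hg : GoodV Δ v) (hΔ : 1 ≤ Δ) (hm : m ∈ Set.Icc (0:ℝ) 1)
    (hfm : cumul v m = 1/2) :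
    ∀ t : ℕ, ∑ i ∈ Finset.Icc 1 t, sgnC (b i) * (cumul v (cuts Δ m b i) - 1/2)
      ≤ (∑ i ∈ Finset.Icc 1 t, Δ * eta Δ (Nat.log 2 i))
        - (Kf v (cuts Δ m b (t+1)) - Kf v m) / eta Δ (Nat.log 2 (t+1)) := by
  have hΔ0 : (0:ℝ) < Δ := lt_of_lt_of_le one_pos hΔ
  intro t
  induction t with
  | zero =>
    rw [cuts_one]
    simp
  | succ t IH =>
    have hsum1 : ∑ i ∈ Finset.Icc 1 (t+1), sgnC (b i) * (cumul v (cuts Δ m b i) - 1/2)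
        = (∑ i ∈ Finset.Icc 1 t, sgnC (b i) * (cumul v (cuts Δ m b i) - 1/2))
          + sgnC (b (t+1)) * (cumul v (cuts Δ m b (t+1)) - 1/2) :=
      Finset.sum_Icc_succ_top (by omega) _
    have hsum2 : ∑ i ∈ Finset.Icc 1 (t+1), Δ * eta Δ (Nat.log 2 i)
        = (∑ i ∈ Finset.Icc 1 t, Δ * eta Δ (Nat.log 2 i)) + Δ * eta Δ (Nat.log 2 (t+1)) :=
      Finset.sum_Icc_succ_top (by omega) _
    set k := Nat.log 2 (t+1) with hkdef
    set c := cuts Δ m b (t+1) with hcdef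
    set s := sgnC (b (t+1)) with hsdef
    set d := clip01 (c - s * eta Δ k) with hddef
    have hstep : s * (cumul v c - 1/2) ≤ (Kf v c - Kf v d) / eta Δ k + Δ * eta Δ k :=
      step_bound hg hΔ (eta_pos hΔ0 k) (eta_le hΔ k) (cuts_mem hm (t+1)) (sgnC_cases _)
    have hsplit : (Kf v c - Kf v d) / eta Δ k
        = (Kf v c - Kf v m) / eta Δ k + (Kf v m - Kf v d) / eta Δ k := by
      rw [← add_div]; ring_nf
    have hKmd : Kf v m - Kf v d ≤ 0 := by
      have := K_min hg hm hfm (clip01_mem (c - s * eta Δ k))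
      linarith
    have hbound : (Kf v m - Kf v d) / eta Δ k ≤ 0 :=
      div_nonpos_of_nonpos_of_nonneg hKmd (eta_pos hΔ0 k).le
    by_cases hpow : t + 2 = 2 ^ Nat.log 2 (t+2)
    · have hc2 : cuts Δ m b (t+2) = m := cuts_succ_pow t hpow
      rw [hsum1, hsum2]
      show _ ≤ _ - (Kf v (cuts Δ m b (t+1+1)) - Kf v m) / eta Δ (Nat.log 2 (t+1+1))
      have ht2 : t + 1 + 1 = t + 2 := rfl
      rw [ht2, hc2, sub_self, zero_div, sub_zero]
      linarith [IH, hstep]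
    · have hlog : Nat.log 2 (t+2) = k := by rw [log_succ_eq_of_not_pow hpow]
      have hc2 : cuts Δ m b (t+2) = d := cuts_succ_succ t hpow
      rw [hsum1, hsum2]
      show _ ≤ _ - (Kf v (cuts Δ m b (t+1+1)) - Kf v m) / eta Δ (Nat.log 2 (t+1+1))
      have ht2 : t + 1 + 1 = t + 2 := rfl
      rw [ht2, hlog, hc2]
      have hneg : (Kf v m - Kf v d) / eta Δ k = -((Kf v d - Kf v m) / eta Δ k) := by
        rw [← neg_div]; ring_nf
      linarith [IH, hstep]

end InvariantA

section Sums

lemma sum_inv_sqrt : ∀ t : ℕ, ∑ i ∈ Finset.Icc 1 t, 1 / Real.sqrt i ≤ 2 * Real.sqrt t := by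
  intro t
  induction t with
  | zero => simp
  | succ t IH =>
    rw [Finset.sum_Icc_succ_top (by omega)]
    have h1 : Real.sqrt t ≤ Real.sqrt ((t:ℝ)+1) := by
      apply Real.sqrt_le_sqrt; linarith
    have h2 : (0:ℝ) < Real.sqrt ((t:ℝ)+1) := by
      apply Real.sqrt_pos.mpr; positivity
    have h3 : Real.sqrt ((t:ℝ)+1) * Real.sqrt ((t:ℝ)+1) = (t:ℝ)+1 :=
      Real.mul_self_sqrt (by positivity)
    have h4 : Real.sqrt (t:ℝ) * Real.sqrt (t:ℝ) = (t:ℝ) :=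
      Real.mul_self_sqrt (by positivity)
    have hcast : ((t+1 : ℕ) : ℝ) = (t:ℝ)+1 := by push_cast; ring
    rw [hcast]
    have key : 1 / Real.sqrt ((t:ℝ)+1) ≤ 2 * Real.sqrt ((t:ℝ)+1) - 2 * Real.sqrt t := by
      rw [div_le_iff₀ h2]
      nlinarith [h1, h3, h4, Real.sqrt_nonneg (t:ℝ)]
    linarith [IH, key]

lemma sqrt2_sq : Real.sqrt 2 ^ 2 = 2 := Real.sq_sqrt (by norm_num)

lemma one_le_sqrt2 : (1:ℝ) ≤ Real.sqrt 2 := by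
  nlinarith [sqrt2_sq, Real.sqrt_nonneg 2]

lemma two_pow_half_eq (n : ℕ) : (2:ℝ) ^ n = Real.sqrt 2 ^ (2 * n) := by
  rw [pow_mul, sqrt2_sq]

lemma pow_half_ge (k : ℕ) : Real.sqrt 2 ^ k ≤ (2:ℝ) ^ ((k+1)/2) := by
  rw [two_pow_half_eq]
  exact pow_le_pow_right₀ one_le_sqrt2 (by omega)

lemma pow_half_le (k : ℕ) : (2:ℝ) ^ ((k+1)/2) ≤ Real.sqrt 2 * Real.sqrt 2 ^ k := by
  rw [two_pow_half_eq]
  have e : Real.sqrt 2 * Real.sqrt 2 ^ k = Real.sqrt 2 ^ (k+1) := by ring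
  rw [e]
  exact pow_le_pow_right₀ one_le_sqrt2 (by omega)

lemma sqrt2_pow_eq (L : ℕ) : Real.sqrt 2 ^ L = Real.sqrt (2 ^ L) := by
  induction L with
  | zero => simp
  | succ L IH =>
    rw [pow_succ, pow_succ, IH, ← Real.sqrt_mul (by positivity)]

lemma sqrt2_pow_le_sqrt {L n : ℕ} (h : 2^L ≤ n) : Real.sqrt 2 ^ L ≤ Real.sqrt n := by
  rw [sqrt2_pow_eq]
  apply Real.sqrt_le_sqrt
  calc ((2:ℝ)^L) = ((2^L : ℕ) : ℝ) := by push_cast; ring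
  _ ≤ (n : ℝ) := by exact_mod_cast h

lemma eta_pointwise {Δ : ℝ} (hΔ : 1 ≤ Δ) {i : ℕ} (hi : 1 ≤ i) :
    Δ * eta Δ (Nat.log 2 i) ≤ (Real.sqrt 2 / 2) * (1 / Real.sqrt i) := by
  have hΔ0 : (0:ℝ) < Δ := lt_of_lt_of_le one_pos hΔ
  set k := Nat.log 2 i with hk
  have hpow : (i:ℝ) < 2 * 2^k := by
    have h := Nat.lt_pow_succ_log_self (by norm_num : 1 < 2) i
    have h' : (i:ℝ) < ((2^(k+1) : ℕ) : ℝ) := by exact_mod_cast h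
    calc (i:ℝ) < ((2^(k+1):ℕ):ℝ) := h'
    _ = 2 * 2^k := by push_cast [pow_succ]; ring
  have heq : Δ * eta Δ k = 1 / (2 * 2^((k+1)/2)) := by
    unfold eta
    field_simp
  rw [heq]
  have hsi : Real.sqrt i ≤ Real.sqrt 2 * Real.sqrt 2 ^ k := by
    calc Real.sqrt i ≤ Real.sqrt (2 * 2^k) := Real.sqrt_le_sqrt hpow.le
    _ = Real.sqrt 2 * Real.sqrt (2^k) := Real.sqrt_mul (by norm_num) _
    _ = Real.sqrt 2 * Real.sqrt 2 ^ k := by rw [← sqrt2_pow_eq]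
  have hge : Real.sqrt 2 ^ k ≤ (2:ℝ)^((k+1)/2) := pow_half_ge k
  have hs2 : (0:ℝ) < Real.sqrt 2 := by nlinarith [one_le_sqrt2]
  have hsi0 : (0:ℝ) < Real.sqrt i := by
    apply Real.sqrt_pos.mpr
    have : (0:ℕ) < i := by omega
    exact_mod_cast this
  have key : Real.sqrt i ≤ Real.sqrt 2 * 2^((k+1)/2) :=
    le_trans hsi (by nlinarith)
  have e : (Real.sqrt 2 / 2) * (1 / Real.sqrt i) = Real.sqrt 2 / (2 * Real.sqrt i) := by
    field_simp
  rw [e, div_le_div_iff₀ (by positivity) (by positivity)]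
  nlinarith [key]

lemma sum_eta_le {Δ : ℝ} (hΔ : 1 ≤ Δ) (t : ℕ) :
    ∑ i ∈ Finset.Icc 1 t, Δ * eta Δ (Nat.log 2 i) ≤ Real.sqrt 2 * Real.sqrt t := by
  calc ∑ i ∈ Finset.Icc 1 t, Δ * eta Δ (Nat.log 2 i)
      ≤ ∑ i ∈ Finset.Icc 1 t, (Real.sqrt 2 / 2) * (1 / Real.sqrt i) := by
        apply Finset.sum_le_sum
        intro i hi
        exact eta_pointwise hΔ (Finset.mem_Icc.mp hi).1
    _ = (Real.sqrt 2 / 2) * ∑ i ∈ Finset.Icc 1 t, 1 / Real.sqrt i := by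
        rw [Finset.mul_sum]
    _ ≤ (Real.sqrt 2 / 2) * (2 * Real.sqrt t) := by
        apply mul_le_mul_of_nonneg_left (sum_inv_sqrt t)
        positivity
    _ = Real.sqrt 2 * Real.sqrt t := by ring

lemma ratl : (2 * Real.sqrt 2 + 2) * (Real.sqrt 2 - 1) = 2 := by
  nlinarith [sqrt2_sq]

lemma sum_epoch_le {Δ : ℝ} (hΔ : 1 ≤ Δ) (t : ℕ) :
    ∑ j ∈ Finset.range (Nat.log 2 (t+1) + 1), 1 / (2 * eta Δ j)
      ≤ (2 * Real.sqrt 2 + 2) * Δ * Real.sqrt ((t:ℝ)+1) := by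
  have hΔ0 : (0:ℝ) < Δ := lt_of_lt_of_le one_pos hΔ
  set L := Nat.log 2 (t+1) with hL
  have hs2 : (0:ℝ) < Real.sqrt 2 := by nlinarith [one_le_sqrt2]
  have hden : (0:ℝ) < Real.sqrt 2 - 1 := by nlinarith [sqrt2_sq]
  have step1 : ∀ j : ℕ, 1 / (2 * eta Δ j) = Δ * 2^((j+1)/2) := by
    intro j
    unfold eta
    field_simp
  have step2 : ∑ j ∈ Finset.range (L + 1), 1 / (2 * eta Δ j)
      ≤ ∑ j ∈ Finset.range (L + 1), (Δ * Real.sqrt 2) * Real.sqrt 2 ^ j := by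
    apply Finset.sum_le_sum
    intro j _
    rw [step1 j]
    calc Δ * 2^((j+1)/2) ≤ Δ * (Real.sqrt 2 * Real.sqrt 2 ^ j) :=
          mul_le_mul_of_nonneg_left (pow_half_le j) hΔ0.le
    _ = (Δ * Real.sqrt 2) * Real.sqrt 2 ^ j := by ring
  have step3 : ∑ j ∈ Finset.range (L + 1), (Δ * Real.sqrt 2) * Real.sqrt 2 ^ j
      = (Δ * Real.sqrt 2) * ((Real.sqrt 2 ^ (L+1) - 1) / (Real.sqrt 2 - 1)) := by
    rw [← Finset.mul_sum, geom_sum_eq (by nlinarith [sqrt2_sq] : Real.sqrt 2 ≠ 1)]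
  have hpowL : Real.sqrt 2 ^ L ≤ Real.sqrt ((t:ℝ)+1) := by
    have h2L : 2^L ≤ t+1 := Nat.pow_log_le_self 2 (by omega)
    have := sqrt2_pow_le_sqrt h2L
    have hc : ((t+1:ℕ):ℝ) = (t:ℝ)+1 := by push_cast; ring
    rwa [hc] at this
  have hfin : (Δ * Real.sqrt 2) * ((Real.sqrt 2 ^ (L+1) - 1) / (Real.sqrt 2 - 1))
      ≤ (2 * Real.sqrt 2 + 2) * Δ * Real.sqrt ((t:ℝ)+1) := by
    have hnum : Real.sqrt 2 ^ (L+1) - 1 ≤ Real.sqrt 2 * Real.sqrt 2 ^ L := by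
      rw [pow_succ]; nlinarith [pow_pos hs2 L]
    have hq : (Real.sqrt 2 ^ (L+1) - 1) / (Real.sqrt 2 - 1)
        ≤ (Real.sqrt 2 * Real.sqrt 2 ^ L) / (Real.sqrt 2 - 1) :=
      by apply (div_le_div_iff_of_pos_right hden).mpr hnum
    have hLpos : (0:ℝ) ≤ Real.sqrt 2 ^ L := (pow_pos hs2 L).le
    have e : (Δ * Real.sqrt 2) * ((Real.sqrt 2 * Real.sqrt 2 ^ L) / (Real.sqrt 2 - 1))
        = ((2 * Real.sqrt 2 + 2) * Δ) * Real.sqrt 2 ^ L := by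
      rw [mul_div_assoc'] at *
      rw [div_eq_iff (by nlinarith [sqrt2_sq] : Real.sqrt 2 - 1 ≠ 0)]
      nlinarith [sqrt2_sq, sq_nonneg (Real.sqrt 2 ^ L), pow_pos hs2 L, mul_pos hΔ0 (pow_pos hs2 L)]
    calc (Δ * Real.sqrt 2) * ((Real.sqrt 2 ^ (L+1) - 1) / (Real.sqrt 2 - 1))
        ≤ (Δ * Real.sqrt 2) * ((Real.sqrt 2 * Real.sqrt 2 ^ L) / (Real.sqrt 2 - 1)) := by
          apply mul_le_mul_of_nonneg_left hq (by positivity)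
      _ = ((2 * Real.sqrt 2 + 2) * Δ) * Real.sqrt 2 ^ L := e
      _ ≤ ((2 * Real.sqrt 2 + 2) * Δ) * Real.sqrt ((t:ℝ)+1) := by
          apply mul_le_mul_of_nonneg_left hpowL (by nlinarith [one_le_sqrt2])
      _ = (2 * Real.sqrt 2 + 2) * Δ * Real.sqrt ((t:ℝ)+1) := by ring
  linarith [step2, step3.le, hfin]

end Sums

section Corollaries

variable {Δ m : ℝ} {v : ℝ → ℝ} {b : ℕ → Choice}

lemma cor_alice (hg : GoodV Δ v) (hΔ : 1 ≤ Δ) (hm : m ∈ Set.Icc (0:ℝ) 1)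
    (hfm : cumul v m = 1/2) (t : ℕ) :
    ∑ i ∈ Finset.Icc 1 t, sgnC (b i) * (cumul v (cuts Δ m b i) - 1/2)
      ≤ Real.sqrt 2 * Real.sqrt t := by
  have hΔ0 : (0:ℝ) < Δ := lt_of_lt_of_le one_pos hΔ
  have h1 := inv_alice (b := b) hg hΔ hm hfm t
  have h2 := sum_eta_le (Δ := Δ) hΔ t
  have hpot : 0 ≤ (Kf v (cuts Δ m b (t+1)) - Kf v m) / eta Δ (Nat.log 2 (t+1)) := by
    apply div_nonneg _ (eta_pos hΔ0 _).le
    have := K_min hg hm hfm (cuts_mem (b := b) (Δ := Δ) hm (t+1))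
    linarith
  linarith

lemma cor_bob (hg : GoodV Δ v) (hΔ : 1 ≤ Δ) (hm : m ∈ Set.Icc (0:ℝ) 1) (t : ℕ) :
    ∑ i ∈ Finset.Icc 1 t, sgnC (b i) * (cumul v (cuts Δ m b i) - 1/2)
      ≤ Real.sqrt 2 * Real.sqrt t
        + (3 * Real.sqrt 2 + 2) * Δ * Real.sqrt ((t:ℝ)+1) := by
  have hΔ0 : (0:ℝ) < Δ := lt_of_lt_of_le one_pos hΔ
  have h1 := inv_bob (b := b) hg hΔ hm t
  have h2 := sum_eta_le (Δ := Δ) hΔ t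
  have h3 := sum_epoch_le (Δ := Δ) hΔ t
  set L := Nat.log 2 (t+1) with hL
  have hs2 : (0:ℝ) < Real.sqrt 2 := by nlinarith [one_le_sqrt2]
  have hpot : -((Kf v (cuts Δ m b (t+1)) - Kf v m) / eta Δ L)
      ≤ Real.sqrt 2 * Δ * Real.sqrt ((t:ℝ)+1) := by
    have hKb : Kf v m - Kf v (cuts Δ m b (t+1)) ≤ 1/2 :=
      K_abs hg hm (cuts_mem (b := b) (Δ := Δ) hm (t+1))
    have e0 : -((Kf v (cuts Δ m b (t+1)) - Kf v m) / eta Δ L)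
        = (Kf v m - Kf v (cuts Δ m b (t+1))) / eta Δ L := by
      rw [← neg_div]; ring_nf
    rw [e0]
    have e1 : (Kf v m - Kf v (cuts Δ m b (t+1))) / eta Δ L ≤ (1/2) / eta Δ L :=
      (div_le_div_iff_of_pos_right (eta_pos hΔ0 L)).mpr hKb
    have e2 : (1/2 : ℝ) / eta Δ L = 1 / (2 * eta Δ L) := by rw [div_div]
    have e3 : (1:ℝ) / (2 * eta Δ L) = Δ * 2^((L+1)/2) := by
      unfold eta; field_simp
    have e4 : Δ * 2^((L+1)/2) ≤ Δ * (Real.sqrt 2 * Real.sqrt 2 ^ L) :=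
      mul_le_mul_of_nonneg_left (pow_half_le L) hΔ0.le
    have hpowL : Real.sqrt 2 ^ L ≤ Real.sqrt ((t:ℝ)+1) := by
      have h2L : 2^L ≤ t+1 := Nat.pow_log_le_self 2 (by omega)
      have h5 := sqrt2_pow_le_sqrt h2L
      have hc : ((t+1:ℕ):ℝ) = (t:ℝ)+1 := by push_cast; ring
      rwa [hc] at h5
    have e5 : Δ * (Real.sqrt 2 * Real.sqrt 2 ^ L) ≤ Real.sqrt 2 * Δ * Real.sqrt ((t:ℝ)+1) := by
      calc Δ * (Real.sqrt 2 * Real.sqrt 2 ^ L) = (Real.sqrt 2 * Δ) * Real.sqrt 2 ^ L := by ring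
      _ ≤ (Real.sqrt 2 * Δ) * Real.sqrt ((t:ℝ)+1) :=
          mul_le_mul_of_nonneg_left hpowL (by positivity)
      _ = Real.sqrt 2 * Δ * Real.sqrt ((t:ℝ)+1) := by ring
    linarith [e1, e2.le, e3.le, e4, e5]
  have hsplit : (2 * Real.sqrt 2 + 2) * Δ * Real.sqrt ((t:ℝ)+1)
      + Real.sqrt 2 * Δ * Real.sqrt ((t:ℝ)+1)
      = (3 * Real.sqrt 2 + 2) * Δ * Real.sqrt ((t:ℝ)+1) := by ring
  linarith

end Corollaries

section Numerics

lemma log_le_div_e {y : ℝ} (hy : 0 < y) : Real.log y ≤ y / Real.exp 1 := by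
  have h := Real.log_le_sub_one_of_pos (x := y / Real.exp 1) (by positivity)
  rw [Real.log_div hy.ne' (Real.exp_ne_zero 1), Real.log_exp] at h
  linarith

lemma sqrt_twofifth_le : Real.sqrt (2/5) ≤ 0.633 := by
  have : (0.633:ℝ) = Real.sqrt (0.633^2) := (Real.sqrt_sq (by norm_num)).symm
  rw [this]
  apply Real.sqrt_le_sqrt
  norm_num

lemma sqrt_two_le : Real.sqrt 2 ≤ 1.415 := by
  have : (1.415:ℝ) = Real.sqrt (1.415^2) := (Real.sqrt_sq (by norm_num)).symm
  rw [this]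
  apply Real.sqrt_le_sqrt
  norm_num

lemma log_bound {t : ℕ} (ht : 3 ≤ t) :
    Real.log (2 * t / 5) ≤ 0.47 * Real.sqrt t := by
  have ht3 : (3:ℝ) ≤ t := by exact_mod_cast ht
  have hx0 : (0:ℝ) < 2 * t / 5 := by linarith
  have hA : (0:ℝ) ≤ Real.sqrt t := Real.sqrt_nonneg _
  have h1 : Real.log (2 * (t:ℝ) / 5) = 2 * Real.log (Real.sqrt (2 * t / 5)) := by
    rw [Real.log_sqrt hx0.le]; ring
  have h2 : Real.log (Real.sqrt (2 * (t:ℝ) / 5)) ≤ Real.sqrt (2 * t / 5) / Real.exp 1 :=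
    log_le_div_e (Real.sqrt_pos.mpr hx0)
  have h3 : Real.sqrt (2 * (t:ℝ) / 5) = Real.sqrt (2/5) * Real.sqrt t := by
    rw [show 2 * (t:ℝ) / 5 = (2/5) * t by ring, Real.sqrt_mul (by norm_num)]
  have hE : (2.71:ℝ) ≤ Real.exp 1 := by
    have := Real.exp_one_gt_d9
    linarith
  have hE0 : (0:ℝ) < Real.exp 1 := Real.exp_pos 1
  have h25 := sqrt_twofifth_le
  have h250 : (0:ℝ) ≤ Real.sqrt (2/5) := Real.sqrt_nonneg _
  rw [h1]
  have h4 : Real.sqrt (2 * (t:ℝ) / 5) / Real.exp 1 ≤ (0.633 * Real.sqrt t) / 2.71 := by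
    apply div_le_div₀ (by positivity) _ (by norm_num) hE
    rw [h3]
    exact mul_le_mul_of_nonneg_right h25 hA
  have h5 : (2:ℝ) * ((0.633 * Real.sqrt t) / 2.71) ≤ 0.47 * Real.sqrt t := by
    have e : (2:ℝ) * ((0.633 * Real.sqrt t) / 2.71) = (1.266/2.71) * Real.sqrt t := by ring
    rw [e]
    apply mul_le_mul_of_nonneg_right _ hA
    norm_num
  calc 2 * Real.log (Real.sqrt (2 * (t:ℝ) / 5)) ≤ 2 * (Real.sqrt (2 * t / 5) / Real.exp 1) := by linarith
  _ ≤ 2 * ((0.633 * Real.sqrt t) / 2.71) := by linarith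
  _ ≤ 0.47 * Real.sqrt t := h5

lemma bob_numeric {Δ : ℝ} (hΔ : 1 ≤ Δ) {t : ℕ} (ht : 3 ≤ t) :
    Real.sqrt 2 * Real.sqrt t + (3 * Real.sqrt 2 + 2) * Δ * Real.sqrt ((t:ℝ)+1)
      ≤ (5 * Δ + 11) * t / Real.log (2 * t / 5) := by
  have ht3 : (3:ℝ) ≤ t := by exact_mod_cast ht
  have hA : (0:ℝ) ≤ Real.sqrt t := Real.sqrt_nonneg _
  have hAA : Real.sqrt t * Real.sqrt t = (t:ℝ) := Real.mul_self_sqrt (by linarith)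
  have hlogpos : (0:ℝ) < Real.log (2 * t / 5) := by
    apply Real.log_pos; linarith
  have hs2 := sqrt_two_le
  have hs2' := one_le_sqrt2
  have ht1 : Real.sqrt ((t:ℝ)+1) ≤ Real.sqrt 2 * Real.sqrt t := by
    calc Real.sqrt ((t:ℝ)+1) ≤ Real.sqrt (2*t) := by
          apply Real.sqrt_le_sqrt; linarith
    _ = Real.sqrt 2 * Real.sqrt t := Real.sqrt_mul (by norm_num) _
  have hlog := log_bound ht
  rw [le_div_iff₀ hlogpos]
  have hC0 : (0:ℝ) ≤ 3 * Real.sqrt 2 + 2 := by linarith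
  have hΔ0 : (0:ℝ) < Δ := lt_of_lt_of_le one_pos hΔ
  have key1 : Real.sqrt 2 * Real.sqrt t + (3 * Real.sqrt 2 + 2) * Δ * Real.sqrt ((t:ℝ)+1)
      ≤ (1.415 + 8.85 * Δ) * Real.sqrt t := by
    have e1 : (3 * Real.sqrt 2 + 2) * Δ * Real.sqrt ((t:ℝ)+1)
        ≤ (3 * Real.sqrt 2 + 2) * Δ * (Real.sqrt 2 * Real.sqrt t) := by
      apply mul_le_mul_of_nonneg_left ht1 (by positivity)
    have e2 : (3 * Real.sqrt 2 + 2) * Δ * (Real.sqrt 2 * Real.sqrt t)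
        ≤ 8.85 * Δ * Real.sqrt t := by
      have h85 : (3 * Real.sqrt 2 + 2) * Real.sqrt 2 ≤ 8.85 := by
        nlinarith [sqrt2_sq, hs2]
      have e2' := mul_le_mul_of_nonneg_right h85 (mul_nonneg hΔ0.le hA)
      nlinarith [e2']
    nlinarith [hA, e1, e2, hs2]
  have key2 : ((1.415:ℝ) + 8.85 * Δ) * Real.sqrt t * Real.log (2*t/5)
      ≤ (1.415 + 8.85 * Δ) * Real.sqrt t * (0.47 * Real.sqrt t) := by
    apply mul_le_mul_of_nonneg_left hlog (by positivity)
  have key3 : ((1.415:ℝ) + 8.85 * Δ) * Real.sqrt t * (0.47 * Real.sqrt t)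
      ≤ (5 * Δ + 11) * t := by
    have : ((1.415:ℝ) + 8.85 * Δ) * (0.47) * ((t:ℝ)) ≤ (5 * Δ + 11) * t := by
      nlinarith [hΔ0, ht3]
    nlinarith [hAA, hA, this]
  calc (Real.sqrt 2 * Real.sqrt t + (3 * Real.sqrt 2 + 2) * Δ * Real.sqrt ((t:ℝ)+1))
        * Real.log (2*t/5)
      ≤ ((1.415 + 8.85 * Δ) * Real.sqrt t) * Real.log (2*t/5) := by
        apply mul_le_mul_of_nonneg_right key1 hlogpos.le
    _ ≤ (1.415 + 8.85 * Δ) * Real.sqrt t * (0.47 * Real.sqrt t) := key2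
    _ ≤ (5 * Δ + 11) * t := key3

lemma alice_numeric {t : ℕ} (ht : 3 ≤ t) :
    Real.sqrt 2 * Real.sqrt t ≤ 4 * t / Real.sqrt ((t:ℝ)-1) := by
  have ht3 : (3:ℝ) ≤ t := by exact_mod_cast ht
  have hA : (0:ℝ) ≤ Real.sqrt t := Real.sqrt_nonneg _
  have hAA : Real.sqrt t * Real.sqrt t = (t:ℝ) := Real.mul_self_sqrt (by linarith)
  have hB0 : (0:ℝ) < Real.sqrt ((t:ℝ)-1) := Real.sqrt_pos.mpr (by linarith)
  have hBB : Real.sqrt ((t:ℝ)-1) * Real.sqrt ((t:ℝ)-1) = (t:ℝ)-1 :=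
    Real.mul_self_sqrt (by linarith)
  rw [le_div_iff₀ hB0]
  nlinarith [sq_nonneg (Real.sqrt t - Real.sqrt ((t:ℝ)-1)), sqrt_two_le, one_le_sqrt2, hA, hB0.le]

end Numerics

section Final

lemma cuts_congr {Δ m : ℝ} {b₁ b₂ : ℕ → Choice} :
    ∀ n : ℕ, (∀ i, 1 ≤ i → i < n → b₁ i = b₂ i) → cuts Δ m b₁ n = cuts Δ m b₂ n := by
  intro n
  induction n with
  | zero => intro _; rfl
  | succ n IH =>
    intro hb
    by_cases hc : n + 1 = 2 ^ Nat.log 2 (n+1)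
    · show cuts Δ m b₁ (n+1) = cuts Δ m b₂ (n+1)
      rw [cuts, cuts, if_pos hc, if_pos hc]
    · have hn : 1 ≤ n := by
        by_contra h
        push_neg at h
        interval_cases n
        simp at hc
      show cuts Δ m b₁ (n+1) = cuts Δ m b₂ (n+1)
      rw [cuts, cuts, if_neg hc, if_neg hc]
      rw [IH (fun i h1 h2 => hb i h1 (by omega)), hb n hn (by omega)]

end Final

/-- Alice has a horizon-independent pure strategy such that, on every
trajectory it generates, every Bob with density bounded above by `Δ` has average payoff at
most `1/2 + (5Δ+11)/ln(2t/5)` while Alice's average payoff is at least `1/2 − 4/√(t−1)`,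
for every `t ≥ 3`. -/
theorem alice_enforces_equitable_payoffs
    (δ Δ : ℝ) (hδ : 0 < δ) (hδΔ : δ ≤ Δ)
    (vA : ℝ → ℝ) (hA : IsDensity δ Δ vA) :
    ∃ SA : AliceStrategy,
      (∀ t h₁ h₂, SA t h₁ h₂ ∈ Set.Icc (0:ℝ) 1) ∧
      ∀ (a : ℕ → ℝ) (b : ℕ → Choice),
        (∀ t : ℕ, a (t+1) = SA t (fun i => a (i.1+1)) (fun i => b (i.1+1))) →
        ∀ t : ℕ, 3 ≤ t →
          (∀ vB : ℝ → ℝ,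
            IntervalIntegrable vB volume 0 1 →
            (∀ x ∈ Set.Icc (0:ℝ) 1, 0 ≤ vB x ∧ vB x ≤ Δ) →
            (∫ y in (0:ℝ)..1, vB y) = 1 →
            ∑ i ∈ Finset.Icc 1 t, uB vB a b i ≤
              (t : ℝ) * (1/2 + (5 * Δ + 11) / Real.log (2 * t / 5))) ∧
          (t : ℝ) * (1/2 - 4 / Real.sqrt ((t : ℝ) - 1)) ≤
            ∑ i ∈ Finset.Icc 1 t, uA vA a b i := by
  obtain ⟨hint, hbd, htot⟩ := hA
  have hgA : GoodV Δ vA :=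
    ⟨hint, fun x hx => le_trans hδ.le (hbd x hx).1, fun x hx => (hbd x hx).2, htot⟩
  -- Δ ≥ 1
  have hΔ1 : (1:ℝ) ≤ Δ := by
    have h := intervalIntegral.integral_mono_on (μ := volume)
      (by norm_num : (0:ℝ) ≤ 1) hint (intervalIntegrable_const (c := Δ))
      (fun x hx => (hbd x hx).2)
    rw [intervalIntegral.integral_const, htot] at h
    simpa using h
  -- Alice's median
  obtain ⟨m, hm, hfm⟩ : ∃ m ∈ Set.Icc (0:ℝ) 1, cumul vA m = 1/2 := by
    have hiv := intermediate_value_Icc (by norm_num : (0:ℝ) ≤ 1) hgA.cumul_cont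
    have : (1/2 : ℝ) ∈ Set.Icc (cumul vA 0) (cumul vA 1) := by
      rw [GoodV.cumul_zero (v := vA), hgA.cumul_one]
      norm_num
    obtain ⟨m, hmem, hval⟩ := hiv this
    exact ⟨m, hmem, hval⟩
  -- the strategy
  refine ⟨fun t _ h₂ => cuts Δ m
    (fun i => if h : 1 ≤ i ∧ i - 1 < t then h₂ ⟨i - 1, h.2⟩ else Choice.L) (t+1), ?_, ?_⟩
  · intro t h₁ h₂
    exact cuts_mem hm (t+1)
  · intro a b hcons t ht
    -- the realized cuts agree with `cuts Δ m b`
    have a_eq : ∀ i, 1 ≤ i → a i = cuts Δ m b i := by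
      intro i hi
      obtain ⟨j, rfl⟩ : ∃ j, i = j + 1 := ⟨i - 1, by omega⟩
      rw [hcons j]
      apply cuts_congr
      intro i h1 h2
      have hcond : 1 ≤ i ∧ i - 1 < j := ⟨h1, by omega⟩
      rw [dif_pos hcond]
      show b (i - 1 + 1) = b i
      congr 1
      omega
    have hcard : ∑ i ∈ Finset.Icc 1 t, (1/2 : ℝ) = (t:ℝ)/2 := by
      rw [Finset.sum_const, Nat.card_Icc]
      simp only [nsmul_eq_mul]
      have : (t + 1 - 1 : ℕ) = t := by omega
      rw [this]
      ring
    have ht3 : (3:ℝ) ≤ t := by exact_mod_cast ht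
    have hlogpos : (0:ℝ) < Real.log (2 * t / 5) := by
      apply Real.log_pos; linarith
    constructor
    · -- Bob's bound
      intro vB hBint hBbd hBtot
      have hgB : GoodV Δ vB :=
        ⟨hBint, fun x hx => (hBbd x hx).1, fun x hx => (hBbd x hx).2, hBtot⟩
      have hrw : ∀ i ∈ Finset.Icc 1 t, uB vB a b i
          = 1/2 + sgnC (b i) * (cumul vB (cuts Δ m b i) - 1/2) := by
        intro i hi
        rw [uB, a_eq i (Finset.mem_Icc.mp hi).1]
        cases hbi : b i <;> simp [sgnC, hbi] <;> ring
      rw [Finset.sum_congr rfl hrw, Finset.sum_add_distrib, hcard]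
      have hreg := cor_bob (b := b) hgB hΔ1 hm t
      have hnum := bob_numeric hΔ1 ht
      have : (t:ℝ) * (1/2 + (5 * Δ + 11) / Real.log (2 * t / 5))
          = (t:ℝ)/2 + (5 * Δ + 11) * t / Real.log (2 * t / 5) := by
        field_simp
      rw [this]
      linarith [hreg, hnum]
    · -- Alice's bound
      have hrw : ∀ i ∈ Finset.Icc 1 t, uA vA a b i
          = 1/2 - sgnC (b i) * (cumul vA (cuts Δ m b i) - 1/2) := by
        intro i hi
        rw [uA, a_eq i (Finset.mem_Icc.mp hi).1]
        cases hbi : b i <;> simp [sgnC, hbi] <;> ring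
      rw [Finset.sum_congr rfl hrw, Finset.sum_sub_distrib, hcard]
      have hreg := cor_alice (b := b) hgA hΔ1 hm hfm t
      have hnum := alice_numeric ht
      have hB0 : (0:ℝ) < Real.sqrt ((t:ℝ)-1) := Real.sqrt_pos.mpr (by linarith)
      have : (t:ℝ) * (1/2 - 4 / Real.sqrt ((t:ℝ)-1))
          = (t:ℝ)/2 - 4 * t / Real.sqrt ((t:ℝ)-1) := by
        field_simp
      rw [this]
      linarith [hreg, hnum]
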